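/- Let d ≥ 1 and let B_j = (u_{1,j}, …, u_{d,j}), j = 1, …, d+1, be mutually unbiased bases of ℂ^d. Then the vectors u_{i,j} ⊗ ū_{i,j} − (1/√d)·φ⁰, ranging over all 1 ≤ i ≤ d and 1 ≤ j ≤ d+1, span the orthogonal complement of φ⁰ in ℂ^d ⊗ ℂ^d. -/

import Mathlib

open scoped BigOperators ComplexInnerProductSpace
open Matrix MeasureTheory

noncomputable section

/-- `ℂ^d` with the standard Hermitian inner product. -/
abbrev V (d : ℕ) : Type := EuclideanSpace ℂ (Fin d)

/-- `ℂ^d ⊗ ℂ^d`, identified with functions on `Fin d × Fin d`. -/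
abbrev V2 (d : ℕ) : Type := EuclideanSpace ℂ (Fin d × Fin d)

/-- operators on `ℂ^d ⊗ ℂ^d`, as matrices. -/
abbrev Op2 (d : ℕ) : Type := Matrix (Fin d × Fin d) (Fin d × Fin d) ℂ

/-- tensor (Kronecker) product of vectors. -/
def tens {d : ℕ} (u v : V d) : V2 d := WithLp.toLp 2 (fun p : Fin d × Fin d => u p.1 * v p.2)

/-- entrywise complex conjugate `ū` of a vector. -/
def cvec {d : ℕ} (u : V d) : V d := WithLp.toLp 2 (fun k => starRingEnd ℂ (u k))

/-- the maximally entangled state `φ⁰ = (1/√d) Σ_k e_k ⊗ e_k`. -/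
def phi0 (d : ℕ) : V2 d := WithLp.toLp 2 (fun p : Fin d × Fin d => if p.1 = p.2 then ((Real.sqrt d : ℂ))⁻¹ else 0)

/-- the rank-one operator `|w⟩⟨w|`. -/
def outer {d : ℕ} (w : V2 d) : Op2 d := Matrix.of fun p q => w p * starRingEnd ℂ (w q)

/-- `T_inv = |φ⁰⟩⟨φ⁰| + (1/(d+1))(I - |φ⁰⟩⟨φ⁰|)`. -/
def Tinv (d : ℕ) : Op2 d := outer (phi0 d) + (1 / ((d : ℂ) + 1)) • (1 - outer (phi0 d))


/-- `u j` is the `j`-th orthonormal basis (`j = 1, …, d+1`); the bases are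
mutually unbiased: `|⟨u_{i,j}, u_{i',j'}⟩|² = 1/d` whenever `j ≠ j'`. -/
def IsMUB {d : ℕ} (u : Fin (d + 1) → Fin d → V d) : Prop :=
  (∀ j, Orthonormal ℂ (u j)) ∧
    ∀ j j' i i', j ≠ j' → ‖⟪u j i, u j' i'⟫‖ ^ 2 = 1 / d

lemma inner_tens {d : ℕ} (a c b e : V d) :
    ⟪tens a c, tens b e⟫ = ⟪a, b⟫ * ⟪c, e⟫ := by
  simp only [PiLp.inner_apply, RCLike.inner_apply, tens, PiLp.toLp_apply, Fintype.sum_prod_type, _root_.map_mul]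
  rw [Finset.sum_mul_sum]
  congr 1; ext k; congr 1; ext l; ring

lemma inner_cvec {d : ℕ} (a b : V d) : ⟪cvec a, cvec b⟫ = ⟪b, a⟫ := by
  simp only [PiLp.inner_apply, RCLike.inner_apply, cvec, PiLp.toLp_apply, RingHomCompTriple.comp_apply,
    Complex.conj_conj]
  congr 1; ext k; simp only [RingHom.id_apply]; ring

lemma inner_phi0_tens {d : ℕ} (a : V d) :
    ⟪phi0 d, tens a (cvec a)⟫ = ((Real.sqrt d : ℂ))⁻¹ * ⟪a, a⟫ := by
  simp only [PiLp.inner_apply, RCLike.inner_apply, tens, cvec, phi0, PiLp.toLp_apply, Fintype.sum_prod_type]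
  rw [Finset.mul_sum]
  congr 1; ext k
  rw [Finset.sum_eq_single k]
  · simp [Complex.conj_ofReal, mul_comm, mul_assoc, mul_left_comm]
  · intro l _ h; simp [Ne.symm h]
  · simp

lemma inner_tens_phi0 {d : ℕ} (a : V d) (ha : (⟪a, a⟫ : ℂ) = 1) :
    ⟪tens a (cvec a), phi0 d⟫ = ((Real.sqrt d : ℂ))⁻¹ := by
  rw [← inner_conj_symm, inner_phi0_tens, ha, mul_one, map_inv₀, Complex.conj_ofReal]

lemma inner_phi0_phi0 {d : ℕ} (hd : 1 ≤ d) : ⟪phi0 d, phi0 d⟫ = (1 : ℂ) := by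
  simp only [PiLp.inner_apply, RCLike.inner_apply, phi0, PiLp.toLp_apply, Fintype.sum_prod_type]
  have h1 : ∀ k : Fin d, ∑ l : Fin d,
      (if k = l then ((Real.sqrt d : ℂ))⁻¹ else 0) *
        (starRingEnd ℂ) (if k = l then ((Real.sqrt d : ℂ))⁻¹ else 0) = ((d : ℂ))⁻¹ := by
    intro k
    rw [Finset.sum_eq_single k]
    · simp only [if_true, map_inv₀, Complex.conj_ofReal]
      rw [← mul_inv, ← Complex.ofReal_mul, Real.mul_self_sqrt (by positivity)]
      push_cast; ring
    · intro l _ h; simp [Ne.symm h]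
    · simp
  simp only [h1, Finset.sum_const, Finset.card_univ, Fintype.card_fin, nsmul_eq_mul]
  rw [mul_inv_cancel₀]
  exact_mod_cast Nat.cast_ne_zero.mpr (by omega)

lemma sqrt_inv_sq {d : ℕ} :
    ((Real.sqrt d : ℂ))⁻¹ * ((Real.sqrt d : ℂ))⁻¹ = ((d : ℂ))⁻¹ := by
  rw [← mul_inv, ← Complex.ofReal_mul, Real.mul_self_sqrt (by positivity)]
  push_cast; ring

lemma gram {d : ℕ} (u : Fin (d + 1) → Fin d → V d) (hu : IsMUB u)
    (j j' : Fin (d + 1)) (i i' : Fin d) :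
    ⟪tens (u j i) (cvec (u j i)) - ((Real.sqrt d : ℂ))⁻¹ • phi0 d,
      tens (u j' i') (cvec (u j' i')) - ((Real.sqrt d : ℂ))⁻¹ • phi0 d⟫ =
    if j = j' then ((if i = i' then (1 : ℂ) else 0) - ((d : ℂ))⁻¹) else 0 := by
  have hself : ∀ (j : Fin (d + 1)) (i : Fin d), (⟪u j i, u j i⟫ : ℂ) = 1 := fun j i =>
    (orthonormal_iff_ite.mp (hu.1 j) i i).trans (if_pos rfl)
  have hz : (starRingEnd ℂ) (⟪u j' i', u j i⟫ : ℂ) * (⟪u j' i', u j i⟫ : ℂ) =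
      if j = j' then (if i = i' then (1 : ℂ) else 0) else ((d : ℂ))⁻¹ := by
    rw [mul_comm, Complex.mul_conj, Complex.normSq_eq_norm_sq]
    by_cases h : j = j'
    · rw [if_pos h, ← h, orthonormal_iff_ite.mp (hu.1 j)]
      by_cases h2 : i = i' <;> simp [h2, eq_comm]
    · rw [if_neg h, hu.2 j' j i' i (Ne.symm h)]
      push_cast; rw [one_div]
  rw [inner_sub_left, inner_sub_right, inner_sub_right, inner_smul_left, inner_smul_right,
    inner_smul_right, inner_smul_left, inner_tens, inner_cvec,
    ← inner_conj_symm (u j i) (u j' i'), hz,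
    inner_phi0_tens, hself j' i', inner_tens_phi0 _ (hself j i), inner_phi0_phi0 i.pos,
    map_inv₀, Complex.conj_ofReal]
  by_cases h : j = j' <;> simp only [h, if_true, if_false] <;>
    rw [show ((Real.sqrt d : ℂ))⁻¹ * (((Real.sqrt d : ℂ))⁻¹ * 1) = ((d : ℂ))⁻¹ by
      rw [mul_one, sqrt_inv_sq], show ((Real.sqrt d : ℂ))⁻¹ * ((Real.sqrt d : ℂ))⁻¹ = ((d : ℂ))⁻¹
        from sqrt_inv_sq] <;> ring

lemma inner_phi0_W {d : ℕ} (u : Fin (d + 1) → Fin d → V d) (hu : IsMUB u)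
    (p : Fin (d + 1) × Fin d) :
    ⟪phi0 d, tens (u p.1 p.2) (cvec (u p.1 p.2)) - ((Real.sqrt d : ℂ))⁻¹ • phi0 d⟫ = (0 : ℂ) := by
  have hself : (⟪u p.1 p.2, u p.1 p.2⟫ : ℂ) = 1 :=
    (orthonormal_iff_ite.mp (hu.1 p.1) p.2 p.2).trans (if_pos rfl)
  rw [inner_sub_right, inner_smul_right, inner_phi0_tens, hself, inner_phi0_phi0 p.2.pos,
    mul_one, sub_self]


/-- For mutually unbiased bases, the vectors `u_{i,j} ⊗ ū_{i,j} - (1/√d) φ⁰`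
span the orthogonal complement of `φ⁰`. -/
theorem stmt7 (d : ℕ) (hd : 1 ≤ d) (u : Fin (d + 1) → Fin d → V d) (hu : IsMUB u) :
    Submodule.span ℂ
      (Set.range fun p : Fin (d + 1) × Fin d =>
        tens (u p.1 p.2) (cvec (u p.1 p.2)) - ((Real.sqrt d : ℂ))⁻¹ • phi0 d)
      = (ℂ ∙ phi0 d)ᗮ := by
  haveI : NeZero d := ⟨by omega⟩
  set W : Fin (d + 1) × Fin d → V2 d := fun p =>
    tens (u p.1 p.2) (cvec (u p.1 p.2)) - ((Real.sqrt d : ℂ))⁻¹ • phi0 d with hWdef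
  have hphi : phi0 d ≠ 0 := by
    intro h
    have h0 : ((Real.sqrt d : ℂ))⁻¹ = 0 := by
      have h1 := congrArg (fun v : V2 d => v ((0 : Fin d), (0 : Fin d))) h
      simpa [phi0] using h1
    rw [inv_eq_zero, Complex.ofReal_eq_zero] at h0
    have h2 : (0 : ℝ) < Real.sqrt d := Real.sqrt_pos.mpr (by exact_mod_cast hd)
    exact h2.ne' h0
  have hrank : Module.finrank ℂ ((ℂ ∙ phi0 d)ᗮ) = d * d - 1 := by
    have h1 := Submodule.finrank_add_finrank_orthogonal (K := ℂ ∙ phi0 d)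
    rw [finrank_span_singleton hphi] at h1
    have h2 : Module.finrank ℂ (V2 d) = d * d := by
      simp [finrank_euclideanSpace]
    omega
  set F : Fin (d + 1) × {i : Fin d // i ≠ 0} → V2 d := fun q => W (q.1, q.2.1) with hFdef
  have hcard : Fintype.card {i : Fin d // i ≠ 0} = d - 1 := by
    simp [Fintype.card_subtype_compl]
  have hind : LinearIndependent ℂ F := by
    rw [Fintype.linearIndependent_iff]
    intro g hg
    have key : ∀ (j : Fin (d + 1)) (i : {i : Fin d // i ≠ 0}),
        (d : ℂ) * g (j, i) = ∑ i' : {i : Fin d // i ≠ 0}, g (j, i') := by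
      intro j i
      have h0 : ⟪W (j, i.1), ∑ q, g q • F q⟫ = (0 : ℂ) := by
        rw [hg, inner_zero_right]
      rw [inner_sum] at h0
      simp only [inner_smul_right, hFdef, hWdef, gram u hu] at h0
      rw [Fintype.sum_prod_type, Finset.sum_eq_single j] at h0
      · simp only [if_true] at h0
        have h1 : ∑ i' : {i : Fin d // i ≠ 0},
            g (j, i') * ((if (i : Fin d) = (i' : Fin d) then (1 : ℂ) else 0) - ((d : ℂ))⁻¹)
            = g (j, i) - (∑ i' : {i : Fin d // i ≠ 0}, g (j, i')) * ((d : ℂ))⁻¹ := by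
          simp only [mul_sub, Finset.sum_sub_distrib]
          congr 1
          · rw [Finset.sum_eq_single i]
            · simp
            · intro i' _ hne
              rw [if_neg (fun hh : (i : Fin d) = (i' : Fin d) => hne (Subtype.ext hh).symm), mul_zero]
            · simp
          · rw [Finset.sum_mul]
        rw [h1, sub_eq_zero] at h0
        have hdne : (d : ℂ) ≠ 0 := Nat.cast_ne_zero.mpr (by omega)
        rw [h0]
        field_simp
      · intro x _ hx
        rw [Finset.sum_eq_zero]
        intro y _
        rw [if_neg (fun hh : j = x => hx hh.symm), mul_zero]
      · simp
    intro q
    obtain ⟨j, i⟩ := q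
    have hdne : (d : ℂ) ≠ 0 := Nat.cast_ne_zero.mpr (by omega)
    have hS : (∑ i' : {i : Fin d // i ≠ 0}, g (j, i')) = 0 := by
      have h2 : (d : ℂ) * (∑ i' : {i : Fin d // i ≠ 0}, g (j, i'))
          = ((d : ℂ) - 1) * (∑ i' : {i : Fin d // i ≠ 0}, g (j, i')) := by
        rw [Finset.mul_sum]
        calc ∑ i' : {i : Fin d // i ≠ 0}, (d : ℂ) * g (j, i')
            = ∑ _i' : {i : Fin d // i ≠ 0}, (∑ i' : {i : Fin d // i ≠ 0}, g (j, i')) :=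
              Finset.sum_congr rfl fun i' _ => key j i'
          _ = ((d : ℂ) - 1) * (∑ i' : {i : Fin d // i ≠ 0}, g (j, i')) := by
              rw [Finset.sum_const, Finset.card_univ, hcard, nsmul_eq_mul]
              congr 1
              push_cast [Nat.cast_sub hd]
              ring
      linear_combination h2
    have h3 := key j i
    rw [hS] at h3
    exact (mul_eq_zero.mp h3).resolve_left hdne
  have h3 : Module.finrank ℂ (Submodule.span ℂ (Set.range F)) = (d + 1) * (d - 1) := by
    rw [finrank_span_eq_card hind, Fintype.card_prod, Fintype.card_fin, hcard]
  have hle : Submodule.span ℂ (Set.range F) ≤ Submodule.span ℂ (Set.range W) :=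
    Submodule.span_mono (by rintro x ⟨q, rfl⟩; exact ⟨(q.1, q.2.1), rfl⟩)
  have hWle : Submodule.span ℂ (Set.range W) ≤ (ℂ ∙ phi0 d)ᗮ := by
    rw [Submodule.span_le]
    rintro x ⟨p, rfl⟩
    rw [SetLike.mem_coe, Submodule.mem_orthogonal_singleton_iff_inner_right]
    exact inner_phi0_W u hu p
  refine Submodule.eq_of_le_of_finrank_le hWle ?_
  rw [hrank]
  have h4 : d * d - 1 = (d + 1) * (d - 1) := by
    obtain ⟨e, rfl⟩ : ∃ e, d = e + 1 := ⟨d - 1, by omega⟩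
    have h5 : (e + 1) * (e + 1) = e * e + 2 * e + 1 := by ring
    have h6 : (e + 1 + 1) * (e + 1 - 1) = e * e + 2 * e := by
      simp; ring
    omega
  rw [h4, ← h3]
  exact Submodule.finrank_mono hle
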